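/- Let (C,V) be a 2-Euclidean election and G its controversity graph. If G contains a cycle, then G is connected. -/

import Mathlib

open SimpleGraph

section Aux



lemma my_cramer (Xa Ya Xb Yb Xc Yc : ℝ) (hXa : 0 < Xa) (hXb : 0 < Xb) (hXc : 0 < Xc)
    (h1 : 0 < Xa * Yc - Ya * Xc) (h2 : 0 < Xc * Yb - Yc * Xb) :
    ∃ α β : ℝ, 0 < α ∧ 0 < β ∧ α * Xa + β * Xb = Xc ∧ α * Ya + β * Yb = Yc := by
  have hD : 0 < Xa * Yb - Ya * Xb := by
    nlinarith [mul_pos hXa h2, mul_pos hXb h1]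
  refine ⟨(Xc * Yb - Yc * Xb) / (Xa * Yb - Ya * Xb), (Xa * Yc - Ya * Xc) / (Xa * Yb - Ya * Xb),
    div_pos h2 hD, div_pos h1 hD, ?_, ?_⟩ <;>
  · rw [div_mul_eq_mul_div, div_mul_eq_mul_div, ← add_div, div_eq_iff (ne_of_gt hD)]
    ring

lemma my_pos_aux (e f A B : ℝ) (h : 0 < e * A + f * B) : 0 < e ^ 2 + f ^ 2 := by
  rcases lt_trichotomy (e ^ 2 + f ^ 2) 0 with hlt | heq | hgt
  · nlinarith [sq_nonneg e, sq_nonneg f]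
  · have he2 : e ^ 2 = 0 := le_antisymm (by nlinarith [sq_nonneg f]) (sq_nonneg e)
    have hf2 : f ^ 2 = 0 := le_antisymm (by nlinarith [sq_nonneg e]) (sq_nonneg f)
    have he : e = 0 := by nlinarith
    have hf : f = 0 := by nlinarith
    rw [he, hf] at h; linarith
  · exact hgt

lemma my_geom (e f cz pz0 pz1 pa0 pa1 pb0 pb1 pc0 pc1 : ℝ)
    (hza : e * pa0 + f * pa1 < cz) (hz : cz < e * pz0 + f * pz1)
    (hzb : e * pb0 + f * pb1 < cz) (hzc : e * pc0 + f * pc1 < cz)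
    (g h t : ℝ)
    (hta : t < g * pa0 + h * pa1) (htb : t < g * pb0 + h * pb1)
    (htc : g * pc0 + h * pc1 < t) (htz : g * pz0 + h * pz1 < t)
    (k l s : ℝ)
    (hsc : s < k * pc0 + l * pc1)
    (hsz : k * pz0 + l * pz1 < s) (hsa : k * pa0 + l * pa1 < s) (hsb : k * pb0 + l * pb1 < s)
    (h1 : 0 < (e * (pz0 - pa0) + f * (pz1 - pa1)) * (f * (pc0 - pz0) - e * (pc1 - pz1))
            - (f * (pa0 - pz0) - e * (pa1 - pz1)) * (e * (pz0 - pc0) + f * (pz1 - pc1)))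
    (h2 : 0 < (e * (pz0 - pc0) + f * (pz1 - pc1)) * (f * (pb0 - pz0) - e * (pb1 - pz1))
            - (f * (pc0 - pz0) - e * (pc1 - pz1)) * (e * (pz0 - pb0) + f * (pz1 - pb1))) :
    False := by
  have hXa : 0 < e * (pz0 - pa0) + f * (pz1 - pa1) := by nlinarith [hza, hz]
  have hXb : 0 < e * (pz0 - pb0) + f * (pz1 - pb1) := by nlinarith [hzb, hz]
  have hXc : 0 < e * (pz0 - pc0) + f * (pz1 - pc1) := by nlinarith [hzc, hz]
  obtain ⟨α, β, hα, hβ, hX, hY⟩ := my_cramer _ _ _ _ _ _ hXa hXb hXc h1 h2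
  have hN : 0 < e ^ 2 + f ^ 2 := my_pos_aux e f (pz0 - pa0) (pz1 - pa1) hXa
  have hc0 : pc0 - pz0 = α * (pa0 - pz0) + β * (pb0 - pz0) := by
    have hN0 : (e ^ 2 + f ^ 2) * (pc0 - pz0)
        = (e ^ 2 + f ^ 2) * (α * (pa0 - pz0) + β * (pb0 - pz0)) := by
      linear_combination e * hX + (-f) * hY
    exact mul_left_cancel₀ (ne_of_gt hN) hN0
  have hc1 : pc1 - pz1 = α * (pa1 - pz1) + β * (pb1 - pz1) := by
    have hN1 : (e ^ 2 + f ^ 2) * (pc1 - pz1)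
        = (e ^ 2 + f ^ 2) * (α * (pa1 - pz1) + β * (pb1 - pz1)) := by
      linear_combination f * hX + e * hY
    exact mul_left_cancel₀ (ne_of_gt hN) hN1
  clear hX hY h1 h2 hXa hXb hXc hN
  rcases le_or_gt 1 (α + β) with hab | hab
  · have hedge : (g * pc0 + h * pc1) - (g * pz0 + h * pz1)
        = α * ((g * pa0 + h * pa1) - (g * pz0 + h * pz1))
        + β * ((g * pb0 + h * pb1) - (g * pz0 + h * pz1)) := by
      linear_combination g * hc0 + h * hc1
    have P1 : 0 < α * ((g * pa0 + h * pa1) - t) := mul_pos hα (sub_pos.mpr hta)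
    have P2 : 0 < β * ((g * pb0 + h * pb1) - t) := mul_pos hβ (sub_pos.mpr htb)
    have P3 : 0 ≤ (α + β - 1) * (t - (g * pz0 + h * pz1)) :=
      mul_nonneg (by linarith) (le_of_lt (sub_pos.mpr htz))
    linarith [hedge, P1, P2, P3, htc]
  · have hsep : (k * pc0 + l * pc1) - (k * pz0 + l * pz1)
        = α * ((k * pa0 + l * pa1) - (k * pz0 + l * pz1))
        + β * ((k * pb0 + l * pb1) - (k * pz0 + l * pz1)) := by
      linear_combination k * hc0 + l * hc1
    have P1 : 0 < α * (s - (k * pa0 + l * pa1)) := mul_pos hα (sub_pos.mpr hsa)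
    have P2 : 0 < β * (s - (k * pb0 + l * pb1)) := mul_pos hβ (sub_pos.mpr hsb)
    have P3 : 0 < (1 - α - β) * (s - (k * pz0 + l * pz1)) :=
      mul_pos (by linarith) (sub_pos.mpr hsz)
    linarith [hsep, P1, P2, P3, hsc]

lemma my_geom_inj (e f cz pz0 pz1 pa0 pa1 pb0 pb1 : ℝ)
    (hza : e * pa0 + f * pa1 < cz) (hz : cz < e * pz0 + f * pz1)
    (hzb : e * pb0 + f * pb1 < cz)
    (k l s : ℝ) (hsa : s < k * pa0 + l * pa1)
    (hsz : k * pz0 + l * pz1 < s) (hsb : k * pb0 + l * pb1 < s)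
    (k' l' s' : ℝ) (hsb' : s' < k' * pb0 + l' * pb1)
    (hsz' : k' * pz0 + l' * pz1 < s') (hsa' : k' * pa0 + l' * pa1 < s')
    (hcross : (e * (pz0 - pa0) + f * (pz1 - pa1)) * (f * (pb0 - pz0) - e * (pb1 - pz1))
            - (f * (pa0 - pz0) - e * (pa1 - pz1)) * (e * (pz0 - pb0) + f * (pz1 - pb1)) = 0) :
    False := by
  have hXa : 0 < e * (pz0 - pa0) + f * (pz1 - pa1) := by nlinarith [hza, hz]
  have hXb : 0 < e * (pz0 - pb0) + f * (pz1 - pb1) := by nlinarith [hzb, hz]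
  have hN : 0 < e ^ 2 + f ^ 2 := my_pos_aux e f (pz0 - pa0) (pz1 - pa1) hXa
  set t : ℝ := (e * (pz0 - pb0) + f * (pz1 - pb1)) / (e * (pz0 - pa0) + f * (pz1 - pa1)) with ht
  have htpos : 0 < t := div_pos hXb hXa
  have hXeq : e * (pz0 - pb0) + f * (pz1 - pb1) = t * (e * (pz0 - pa0) + f * (pz1 - pa1)) := by
    rw [ht, div_mul_eq_mul_div, mul_div_assoc, div_self (ne_of_gt hXa), mul_one]
  have hYeq : f * (pb0 - pz0) - e * (pb1 - pz1) = t * (f * (pa0 - pz0) - e * (pa1 - pz1)) := by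
    rw [ht, div_mul_eq_mul_div, eq_div_iff (ne_of_gt hXa)]
    linear_combination hcross
  have hc0 : pb0 - pz0 = t * (pa0 - pz0) := by
    have h0 : (e ^ 2 + f ^ 2) * (pb0 - pz0) = (e ^ 2 + f ^ 2) * (t * (pa0 - pz0)) := by
      linear_combination (-e) * hXeq + f * hYeq
    exact mul_left_cancel₀ (ne_of_gt hN) h0
  have hc1 : pb1 - pz1 = t * (pa1 - pz1) := by
    have h0 : (e ^ 2 + f ^ 2) * (pb1 - pz1) = (e ^ 2 + f ^ 2) * (t * (pa1 - pz1)) := by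
      linear_combination (-f) * hXeq + (-e) * hYeq
    exact mul_left_cancel₀ (ne_of_gt hN) h0
  clear hXeq hYeq hcross hXa hXb hN ht
  rcases le_or_gt t 1 with ht1 | ht1
  · have hb : (k' * pb0 + l' * pb1) - (k' * pz0 + l' * pz1)
        = t * ((k' * pa0 + l' * pa1) - (k' * pz0 + l' * pz1)) := by
      linear_combination k' * hc0 + l' * hc1
    have P1 : 0 < t * (s' - (k' * pa0 + l' * pa1)) := mul_pos htpos (sub_pos.mpr hsa')
    have P2 : 0 ≤ (1 - t) * (s' - (k' * pz0 + l' * pz1)) :=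
      mul_nonneg (by linarith) (le_of_lt (sub_pos.mpr hsz'))
    linarith [hb, P1, P2, hsb']
  · have hb : (k * pb0 + l * pb1) - (k * pz0 + l * pz1)
        = t * ((k * pa0 + l * pa1) - (k * pz0 + l * pz1)) := by
      linear_combination k * hc0 + l * hc1
    have P1 : 0 < t * ((k * pa0 + l * pa1) - s) := mul_pos htpos (sub_pos.mpr hsa)
    have P2 : 0 < (t - 1) * (s - (k * pz0 + l * pz1)) :=
      mul_pos (by linarith) (sub_pos.mpr hsz)
    linarith [hb, P1, P2, hsb]

lemma my_support_getElem {V : Type*} {G : SimpleGraph V} {u v : V} (p : G.Walk u v) :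
    ∀ (i : ℕ) (hi : i < p.support.length), p.support[i] = p.getVert i := by
  induction p with
  | nil =>
      intro i hi
      simp only [Walk.support_nil, List.length_singleton] at hi
      interval_cases i
      simp [Walk.getVert]
  | cons h p ih =>
      intro i hi
      cases i with
      | zero => simp [Walk.support_cons, Walk.getVert_zero]
      | succ n =>
          simp only [Walk.support_cons, List.length_cons] at hi
          simpa [Walk.support_cons, Walk.getVert_cons_succ] using ih n (by omega)

lemma my_cycle_getVert_ne {V : Type*} {G : SimpleGraph V} {M : V} {q : G.Walk M M}
    (hq : q.IsCycle) {i j : ℕ} (h1 : 1 ≤ i) (hij : i < j) (hj : j ≤ q.length) :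
    q.getVert i ≠ q.getVert j := by
  have hnd : q.support.tail.Nodup := ((Walk.isCycle_def q).mp hq).2.2
  have hlen : q.support.length = q.length + 1 := Walk.length_support q
  have hcons : q.support = M :: q.support.tail := q.support_eq_cons
  have htl : q.support.tail.length = q.length := by
    have := congrArg List.length hcons
    simp only [List.length_cons] at this
    omega
  intro heq
  obtain ⟨i', rfl⟩ : ∃ i', i = i' + 1 := ⟨i - 1, by omega⟩
  obtain ⟨j', rfl⟩ : ∃ j', j = j' + 1 := ⟨j - 1, by omega⟩
  have hi' : i' + 1 < q.support.length := by omega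
  have hj' : j' + 1 < q.support.length := by omega
  have e1 : q.support[i' + 1]'hi' = q.getVert (i' + 1) := my_support_getElem q _ hi'
  have e2 : q.support[j' + 1]'hj' = q.getVert (j' + 1) := my_support_getElem q _ hj'
  have t1 : q.support[i' + 1]'hi' = q.support.tail[i']'(by omega) := by
    rw [List.getElem_of_eq hcons hi', List.getElem_cons_succ]
  have t2 : q.support[j' + 1]'hj' = q.support.tail[j']'(by omega) := by
    rw [List.getElem_of_eq hcons hj', List.getElem_cons_succ]
  have : i' = j' := hnd.getElem_inj_iff.mp (by rw [← t1, ← t2, e1, e2, heq])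
  omega

lemma my_dist_lt {u A B : EuclideanSpace ℝ (Fin 2)} :
    dist u A < dist u B ↔
      (A 0 ^ 2 + A 1 ^ 2) - (B 0 ^ 2 + B 1 ^ 2)
        < 2 * ((A 0 - B 0) * u 0 + (A 1 - B 1) * u 1) := by
  rw [EuclideanSpace.dist_eq, EuclideanSpace.dist_eq, Fin.sum_univ_two, Fin.sum_univ_two,
    Real.sqrt_lt_sqrt_iff (by positivity)]
  simp only [Real.dist_eq, sq_abs]
  constructor <;> intro h <;> nlinarith [h]

lemma my_core {ι : Type*} (G : SimpleGraph ι) (P0 P1 : ι → ℝ)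
    (hsep1 : ∀ v : ι, ∃ g h t : ℝ, t < g * P0 v + h * P1 v ∧
      ∀ u : ι, u ≠ v → g * P0 u + h * P1 u < t)
    (hsep2 : ∀ u v : ι, G.Adj u v → ∃ g h t : ℝ, t < g * P0 u + h * P1 u ∧
      t < g * P0 v + h * P1 v ∧ ∀ w : ι, w ≠ u → w ≠ v → g * P0 w + h * P1 w < t)
    {v₀ : ι} (c : G.Walk v₀ v₀) (hc : c.IsCycle) (z : ι) :
    z ∈ c.support := by
  classical
  by_contra hz
  obtain ⟨e, f, cz, hze, hzlt⟩ := hsep1 z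
  have hzne : ∀ u : ι, u ∈ c.support → u ≠ z := fun u hu h => hz (h ▸ hu)
  set X : ι → ℝ := fun q => e * (P0 z - P0 q) + f * (P1 z - P1 q) with hX
  set Y : ι → ℝ := fun q => f * (P0 q - P0 z) - e * (P1 q - P1 z) with hY
  set ρ : ι → ℝ := fun q => Y q / X q with hρ
  have hXpos : ∀ u : ι, u ≠ z → 0 < X u := by
    intro u hu
    have h1 := hzlt u hu
    simp only [hX]
    linarith [hze]
  have hρne : ∀ u w : ι, u ≠ z → w ≠ z → u ≠ w → ρ u ≠ ρ w := by
    intro u w hu hw huw heq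
    simp only [hρ] at heq
    have heq' : Y u * X w = Y w * X u :=
      (div_eq_div_iff (hXpos u hu).ne' (hXpos w hw).ne').mp heq
    have hcross : X u * Y w - Y u * X w = 0 := by linarith
    simp only [hX, hY] at hcross
    obtain ⟨k, l, s, hs1, hs2⟩ := hsep1 u
    obtain ⟨k', l', s', hs1', hs2'⟩ := hsep1 w
    exact my_geom_inj e f cz (P0 z) (P1 z) (P0 u) (P1 u) (P0 w) (P1 w)
      (hzlt u hu) hze (hzlt w hw)
      k l s hs1 (hs2 z (Ne.symm hu)) (hs2 w (Ne.symm huw))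
      k' l' s' hs1' (hs2' z (Ne.symm hw)) (hs2' u huw)
      hcross
  -- choose the vertex with maximal slope on the cycle
  obtain ⟨M, hMmem, hMmax⟩ := Finset.exists_max_image c.support.toFinset ρ
    ⟨v₀, List.mem_toFinset.mpr c.start_mem_support⟩
  have hM : M ∈ c.support := List.mem_toFinset.mp hMmem
  have hMz : M ≠ z := hzne M hM
  set q := c.rotate M hM with hqdef
  have hq : q.IsCycle := hc.rotate hM
  have hlen : 3 ≤ q.length := hq.three_le_length
  set a := q.getVert 1 with ha
  set b := q.getVert (q.length - 1) with hb
  have hMa : G.Adj M a := by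
    have h0 := q.adj_getVert_succ (show 0 < q.length by omega)
    rw [q.getVert_zero] at h0
    exact h0
  have hbM : G.Adj b M := by
    have h0 := q.adj_getVert_succ (show q.length - 1 < q.length by omega)
    rw [show q.length - 1 + 1 = q.length by omega, q.getVert_length] at h0
    exact h0
  have hab : a ≠ b :=
    my_cycle_getVert_ne hq (le_refl 1) (show 1 < q.length - 1 by omega) (by omega)
  -- membership of getVerts of q in c.support
  have hmemc : ∀ u : ι, u ∈ q.support → u ≠ M → u ∈ c.support := by
    intro u hu huM
    have h1 : u ∈ q.support.tail := by
      have := q.support_eq_cons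
      rw [this] at hu
      rcases List.mem_cons.mp hu with h | h
      · exact absurd h huM
      · exact h
    have h2 : u ∈ c.support.tail := (Walk.support_rotate c M hM).mem_iff.mp h1
    rw [c.support_eq_cons]
    exact List.mem_cons_of_mem _ h2
  have hac : a ∈ c.support :=
    hmemc a (Walk.mem_support_iff_exists_getVert.mpr ⟨1, rfl, by omega⟩) hMa.ne'
  have hbc : b ∈ c.support :=
    hmemc b (Walk.mem_support_iff_exists_getVert.mpr ⟨q.length - 1, rfl, by omega⟩) hbM.ne
  have haz : a ≠ z := hzne a hac
  have hbz : b ≠ z := hzne b hbc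
  have hρaM : ρ a < ρ M :=
    lt_of_le_of_ne (hMmax a (List.mem_toFinset.mpr hac)) (hρne a M haz hMz hMa.ne')
  have hρbM : ρ b < ρ M :=
    lt_of_le_of_ne (hMmax b (List.mem_toFinset.mpr hbc)) (hρne b M hbz hMz hbM.ne)
  -- the main step
  have step : ∀ x y : ι, G.Adj M x → x ≠ z → y ≠ z → y ≠ x → y ≠ M →
      ρ x < ρ y → ρ y < ρ M → False := by
    intro x y hadj hxz hyz hyx hyM hxy hyM'
    obtain ⟨g, h, t, htM, htx, hto⟩ := hsep2 M x hadj
    obtain ⟨k, l, s, hsy, hso⟩ := hsep1 y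
    have h1 : 0 < X x * Y y - Y x * X y := by
      simp only [hρ] at hxy
      have := (div_lt_div_iff₀ (hXpos x hxz) (hXpos y hyz)).mp hxy
      linarith
    have h2 : 0 < X y * Y M - Y y * X M := by
      simp only [hρ] at hyM'
      have := (div_lt_div_iff₀ (hXpos y hyz) (hXpos M hMz)).mp hyM'
      linarith
    simp only [hX, hY] at h1 h2
    exact my_geom e f cz (P0 z) (P1 z) (P0 x) (P1 x) (P0 M) (P1 M) (P0 y) (P1 y)
      (hzlt x hxz) hze (hzlt M hMz) (hzlt y hyz)
      g h t htx htM (hto y hyM hyx) (hto z (Ne.symm hMz) (Ne.symm hxz))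
      k l s hsy (hso z (Ne.symm hyz)) (hso x (Ne.symm hyx)) (hso M (Ne.symm hyM))
      h1 h2
  rcases (hρne a b haz hbz hab).lt_or_gt with hlt | hlt
  · exact step a b hMa (hzne a hac) hbz (Ne.symm hab) hbM.ne hlt hρbM
  · exact step b a hbM.symm hbz haz hab hMa.ne' hlt hρaM

end Aux

noncomputable section

abbrev Plane : Type := EuclideanSpace ℝ (Fin 2)

/-- A single voter `v` is controversial. -/
def Controversial1 {C V : Type*} (pref : V → C → C → Prop) (v : V) : Prop :=
  ∃ a b : C, pref v a b ∧ ∀ u : V, u ≠ v → pref u b a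

/-- The pair `{u,v}` is controversial. -/
def Controversial2 {C V : Type*} (pref : V → C → C → Prop) (u v : V) : Prop :=
  ∃ a b : C, pref u a b ∧ pref v a b ∧ ∀ w : V, w ≠ u → w ≠ v → pref w b a

/-- The controversity graph: vertices are the controversial voters, and there is an
edge between two distinct controversial voters `u,v` whenever `{u,v}` is controversial. -/
def controversityGraph {C V : Type*} (pref : V → C → C → Prop) :
    SimpleGraph {v : V // Controversial1 pref v} :=
  SimpleGraph.fromRel (fun u w => Controversial2 pref u.1 w.1)

/-- if `(C,V)` is 2-Euclidean and its controversity graph contains a cycle,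
then the controversity graph is connected. -/
theorem stmt_2 {C V : Type*} [Fintype C] [Fintype V]
    (pref : V → C → C → Prop) (hord : ∀ v : V, IsStrictTotalOrder C (pref v))
    (heuc : ∃ γ : C ⊕ V → Plane, Function.Injective γ ∧
      ∀ (v : V) (a b : C), pref v a b →
        dist (γ (Sum.inr v)) (γ (Sum.inl a)) < dist (γ (Sum.inr v)) (γ (Sum.inl b)))
    (hcyc : ¬ (controversityGraph pref).IsAcyclic) :
    (controversityGraph pref).Connected := by
  classical
  obtain ⟨γ, -, hγ⟩ := heuc
  set ι := {v : V // Controversial1 pref v} with hι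
  set G := controversityGraph pref with hG
  simp only [SimpleGraph.IsAcyclic, not_forall, not_not] at hcyc
  obtain ⟨v₀, c, hc⟩ := hcyc
  set P0 : ι → ℝ := fun v => γ (Sum.inr v.1) 0 with hP0
  set P1 : ι → ℝ := fun v => γ (Sum.inr v.1) 1 with hP1
  -- separators for single controversial voters
  have hsep1 : ∀ v : ι, ∃ g h t : ℝ, t < g * P0 v + h * P1 v ∧
      ∀ u : ι, u ≠ v → g * P0 u + h * P1 u < t := by
    rintro ⟨v, a, b, hab, hother⟩
    refine ⟨2 * (γ (Sum.inl a) 0 - γ (Sum.inl b) 0), 2 * (γ (Sum.inl a) 1 - γ (Sum.inl b) 1),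
      (γ (Sum.inl a) 0 ^ 2 + γ (Sum.inl a) 1 ^ 2) - (γ (Sum.inl b) 0 ^ 2 + γ (Sum.inl b) 1 ^ 2),
      ?_, ?_⟩
    · have h0 := my_dist_lt.mp (hγ v a b hab)
      simp only [hP0, hP1]
      linarith [h0]
    · intro u hu
      have hune : u.1 ≠ v := fun h => hu (Subtype.ext h)
      have h0 := my_dist_lt.mp (hγ u.1 b a (hother u.1 hune))
      simp only [hP0, hP1]
      linarith [h0]
  -- separators for controversial pairs
  have hsep2 : ∀ u v : ι, G.Adj u v → ∃ g h t : ℝ, t < g * P0 u + h * P1 u ∧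
      t < g * P0 v + h * P1 v ∧ ∀ w : ι, w ≠ u → w ≠ v → g * P0 w + h * P1 w < t := by
    intro u v hadj
    rw [hG, controversityGraph, SimpleGraph.fromRel_adj] at hadj
    have hC2 : Controversial2 pref u.1 v.1 ∨ Controversial2 pref v.1 u.1 := hadj.2
    have main : ∀ x y : ι, Controversial2 pref x.1 y.1 →
        ∃ g h t : ℝ, t < g * P0 x + h * P1 x ∧
          t < g * P0 y + h * P1 y ∧ ∀ w : ι, w ≠ x → w ≠ y → g * P0 w + h * P1 w < t := by
      rintro x y ⟨a, b, hxa, hya, hother⟩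
      refine ⟨2 * (γ (Sum.inl a) 0 - γ (Sum.inl b) 0), 2 * (γ (Sum.inl a) 1 - γ (Sum.inl b) 1),
        (γ (Sum.inl a) 0 ^ 2 + γ (Sum.inl a) 1 ^ 2) - (γ (Sum.inl b) 0 ^ 2 + γ (Sum.inl b) 1 ^ 2),
        ?_, ?_, ?_⟩
      · have h0 := my_dist_lt.mp (hγ x.1 a b hxa)
        simp only [hP0, hP1]
        linarith [h0]
      · have h0 := my_dist_lt.mp (hγ y.1 a b hya)
        simp only [hP0, hP1]
        linarith [h0]
      · intro w hwx hwy
        have hw1 : w.1 ≠ x.1 := fun h => hwx (Subtype.ext h)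
        have hw2 : w.1 ≠ y.1 := fun h => hwy (Subtype.ext h)
        have h0 := my_dist_lt.mp (hγ w.1 b a (hother w.1 hw1 hw2))
        simp only [hP0, hP1]
        linarith [h0]
    rcases hC2 with h | h
    · exact main u v h
    · obtain ⟨g, hh, t, h1, h2, h3⟩ := main v u h
      exact ⟨g, hh, t, h2, h1, fun w hw1 hw2 => h3 w hw2 hw1⟩
  have hsupp : ∀ z : ι, z ∈ c.support := my_core G P0 P1 hsep1 hsep2 c hc
  rw [SimpleGraph.connected_iff]
  refine ⟨fun x y => ?_, ⟨v₀⟩⟩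
  have hx : G.Reachable x v₀ := ⟨(c.takeUntil x (hsupp x)).reverse⟩
  have hy : G.Reachable y v₀ := ⟨(c.takeUntil y (hsupp y)).reverse⟩
  exact hx.trans hy.symm
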